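/- Theorem 5.2: For every world w, the minimal Herbrand model M_w of the definite Horn theory Σ_w represents w and the minimal local name assignment l_w consistent with w. -/
import Mathlib


/-- Principal expressions over keys `K`, global names `G`, local names `N`. -/
inductive PExp (K G N : Type*) where
  | key : K → PExp K G N
  | glob : G → PExp K G N
  | loc : N → PExp K G N
  | s : PExp K G N → PExp K G N → PExp K G N

/-- Formulas of LLNC. -/
inductive Fml (K G N : Type*) where
  | bdto : PExp K G N → PExp K G N → Fml K G N
  | cert : K → Fml K G N → Fml K G N
  | not : Fml K G N → Fml K G N
  | and : Fml K G N → Fml K G N → Fml K G N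

/-- A world: an interpretation of global names and an assignment of
certificates to keys, with only finitely many certificates issued. -/
structure World (K G N : Type*) where
  beta : G → Set K
  certs : K → Set (Fml K G N)
  finite_certs : (⋃ k, certs k).Finite

variable {K G N : Type*}

/-- The interpretation of a principal expression relative to a world, a
local name assignment, and a key. -/
def interp (w : World K G N) (l : K → N → Set K) : PExp K G N → K → Set K
  | .key k', _ => {k'}
  | .glob g, _ => w.beta g
  | .loc n, k => l k n
  | .s p q, k => ⋃ k' ∈ interp w l p k, interp w l q k'

/-- Satisfaction of a formula at a world, local name assignment, and key. -/
def Sat (w : World K G N) (l : K → N → Set K) (k : K) : Fml K G N → Prop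
  | .bdto p q => interp w l q k ⊆ interp w l p k
  | .cert k' φ => φ ∈ w.certs k'
  | .not φ => ¬ Sat w l k φ
  | .and φ ψ => Sat w l k φ ∧ Sat w l k ψ

/-- A local name assignment is consistent with a world if every issued
binding certificate holds at the issuer. -/
def Consistent (w : World K G N) (l : K → N → Set K) : Prop :=
  ∀ (k : K) (n : N) (p : PExp K G N),
    Fml.bdto (.loc n) p ∈ w.certs k → Sat w l k (.bdto (.loc n) p)

/-- The Herbrand domain: the constants `K ∪ G ∪ N`. -/
abbrev Dom (K G N : Type*) := K ⊕ (G ⊕ N)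

/-- The constant for a key. -/
def dkey (k : K) : Dom K G N := Sum.inl k

/-- The constant for a global name. -/
def dglob (g : G) : Dom K G N := Sum.inr (Sum.inl g)

/-- The constant for a local name. -/
def dloc (n : N) : Dom K G N := Sum.inr (Sum.inr n)

/-- A Herbrand structure over the vocabulary `V`, identified with the set of
tuples of the ternary predicate `name` that it satisfies. -/
abbrev Herbrand (K G N : Type*) := Set (Dom K G N × Dom K G N × Dom K G N)

/-- Satisfaction of the translated formula `τ_{x,y}(p)` in a Herbrand
structure `M`. -/
def tauSat (M : Herbrand K G N) : PExp K G N → Dom K G N → Dom K G N → Prop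
  | .key k, x, y => (x, dkey k, y) ∈ M
  | .glob g, x, y => (x, dglob g, y) ∈ M
  | .loc n, x, y => (x, dloc n, y) ∈ M
  | .s q r, x, y => ∃ z : Dom K G N, tauSat M q x z ∧ tauSat M r z y

/-- `M` represents the world `w` and the local name assignment `l`. -/
def Represents (M : Herbrand K G N) (w : World K G N) (l : K → N → Set K) : Prop :=
  ∀ x y z : Dom K G N, (x, y, z) ∈ M ↔
    ((∃ k₁ k₂ : K, x = dkey k₁ ∧ y = dkey k₂ ∧ z = dkey k₂) ∨
     (∃ (k₁ : K) (g : G) (k₂ : K), x = dkey k₁ ∧ y = dglob g ∧ z = dkey k₂ ∧ k₂ ∈ w.beta g) ∨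
     (∃ (k₁ : K) (n : N) (k₂ : K), x = dkey k₁ ∧ y = dloc n ∧ z = dkey k₂ ∧ k₂ ∈ l k₁ n))

/-- `lw` is the (unique) minimal local name assignment consistent with `w`. -/
def IsMinConsistent (w : World K G N) (lw : K → N → Set K) : Prop :=
  Consistent w lw ∧ ∀ l, Consistent w l → ∀ (k : K) (n : N), lw k n ⊆ l k n

/-- `M` is a Herbrand model of the definite Horn theory `Σ_w`. -/
def SigmaModel (w : World K G N) (M : Herbrand K G N) : Prop :=
  (∀ k₁ k₂ : K, (dkey k₁, dkey k₂, dkey k₂) ∈ M) ∧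
  (∀ (k₁ k₂ : K) (g : G), k₂ ∈ w.beta g → (dkey k₁, dglob g, dkey k₂) ∈ M) ∧
  (∀ (k : K) (n : N) (q : PExp K G N), Fml.bdto (.loc n) q ∈ w.certs k →
    ∀ y : Dom K G N, tauSat M q (dkey k) y → (dkey k, dloc n, y) ∈ M)

/-- `M` is the minimal Herbrand model of `Σ_w` (with respect to containment). -/
def IsMinModel (w : World K G N) (M : Herbrand K G N) : Prop :=
  SigmaModel w M ∧ ∀ M' : Herbrand K G N, SigmaModel w M' → M ⊆ M'

/-- The canonical Herbrand structure representing `w` and `l`. -/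
def canonM (w : World K G N) (l : K → N → Set K) : Herbrand K G N :=
  {t | (∃ k₁ k₂ : K, t.1 = dkey k₁ ∧ t.2.1 = dkey k₂ ∧ t.2.2 = dkey k₂) ∨
     (∃ (k₁ : K) (g : G) (k₂ : K), t.1 = dkey k₁ ∧ t.2.1 = dglob g ∧ t.2.2 = dkey k₂ ∧ k₂ ∈ w.beta g) ∨
     (∃ (k₁ : K) (n : N) (k₂ : K), t.1 = dkey k₁ ∧ t.2.1 = dloc n ∧ t.2.2 = dkey k₂ ∧ k₂ ∈ l k₁ n)}

lemma tauSat_canonM (w : World K G N) (l : K → N → Set K) (p : PExp K G N)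
    (x y : Dom K G N) (h : tauSat (canonM w l) p x y) :
    ∃ k k' : K, x = dkey k ∧ y = dkey k' ∧ k' ∈ interp w l p k := by
  induction p generalizing x y with
  | key k0 =>
    rcases h with ⟨k₁, k₂, hx, hy, hz⟩ | ⟨k₁, g, k₂, hx, hy, hz, _⟩ | ⟨k₁, n, k₂, hx, hy, hz, _⟩
    · obtain rfl : k0 = k₂ := Sum.inl.inj hy
      exact ⟨k₁, k0, hx, hz, rfl⟩
    · exact absurd hy (by simp [dglob, dkey])
    · exact absurd hy (by simp [dloc, dkey])
  | glob g0 =>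
    rcases h with ⟨k₁, k₂, hx, hy, hz⟩ | ⟨k₁, g, k₂, hx, hy, hz, hb⟩ | ⟨k₁, n, k₂, hx, hy, hz, _⟩
    · exact absurd hy (by simp [dglob, dkey])
    · obtain rfl : g0 = g := by simpa [dglob] using hy
      exact ⟨k₁, k₂, hx, hz, hb⟩
    · exact absurd hy (by simp [dglob, dloc])
  | loc n0 =>
    rcases h with ⟨k₁, k₂, hx, hy, hz⟩ | ⟨k₁, g, k₂, hx, hy, hz, _⟩ | ⟨k₁, n, k₂, hx, hy, hz, hb⟩
    · exact absurd hy (by simp [dloc, dkey])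
    · exact absurd hy (by simp [dglob, dloc])
    · obtain rfl : n0 = n := by simpa [dloc] using hy
      exact ⟨k₁, k₂, hx, hz, hb⟩
  | s q r ihq ihr =>
    obtain ⟨z, hq, hr⟩ := h
    obtain ⟨k, k', rfl, rfl, hk⟩ := ihq _ _ hq
    obtain ⟨k'', k''', hx, rfl, hk'⟩ := ihr _ _ hr
    obtain rfl : k' = k'' := Sum.inl.inj hx
    exact ⟨k, k''', rfl, rfl, Set.mem_biUnion hk hk'⟩

lemma canonM_sigmaModel (w : World K G N) (lw : K → N → Set K)
    (hc : Consistent w lw) : SigmaModel w (canonM w lw) := by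
  refine ⟨fun k₁ k₂ => Or.inl ⟨k₁, k₂, rfl, rfl, rfl⟩,
    fun k₁ k₂ g hg => Or.inr (Or.inl ⟨k₁, g, k₂, rfl, rfl, rfl, hg⟩),
    fun k n q hq y hy => ?_⟩
  obtain ⟨k', k'', hx, rfl, hk⟩ := tauSat_canonM w lw q _ _ hy
  obtain rfl : k = k' := Sum.inl.inj hx
  exact Or.inr (Or.inr ⟨k, n, k'', rfl, rfl, rfl, hc k n q hq hk⟩)

lemma tauSat_of_interp (w : World K G N) (M : Herbrand K G N) (hM : SigmaModel w M)
    (p : PExp K G N) (k k' : K)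
    (h : k' ∈ interp w (fun k n => {k' | (dkey k, dloc n, dkey k') ∈ M}) p k) :
    tauSat M p (dkey k) (dkey k' : Dom K G N) := by
  induction p generalizing k k' with
  | key k0 =>
    obtain rfl : k' = k0 := h
    exact hM.1 k k'
  | glob g => exact hM.2.1 k k' g h
  | loc n => exact h
  | s q r ihq ihr =>
    obtain ⟨_, ⟨k'', rfl⟩, _, ⟨hk'', rfl⟩, hk'⟩ := h
    exact ⟨dkey k'', ihq k k'' hk'', ihr k'' k' hk'⟩

lemma consistent_of_sigmaModel (w : World K G N) (M : Herbrand K G N)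
    (hM : SigmaModel w M) :
    Consistent w (fun k n => {k' | (dkey k, dloc n, dkey k') ∈ M}) := by
  intro k n p hp k' hk'
  exact hM.2.2 k n p hp _ (tauSat_of_interp w M hM p k k' hk')

/-- Theorem 5.2: the minimal Herbrand model of `Σ_w` represents
`w` and the minimal local name assignment consistent with `w`. -/
theorem min_herbrand_represents [Nonempty K] (w : World K G N)
    (M : Herbrand K G N) (hM : IsMinModel w M)
    (lw : K → N → Set K) (hlw : IsMinConsistent w lw) :
    Represents M w lw := by
  set l' : K → N → Set K := fun k n => {k' | (dkey k, dloc n, dkey k') ∈ M} with hl'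
  have hcl' : Consistent w l' := consistent_of_sigmaModel w M hM.1
  have hsub : ∀ k n, lw k n ⊆ l' k n := hlw.2 l' hcl'
  have hMsub : M ⊆ canonM w lw := hM.2 _ (canonM_sigmaModel w lw hlw.1)
  intro x y z
  constructor
  · intro h; exact hMsub h
  · rintro (⟨k₁, k₂, rfl, rfl, rfl⟩ | ⟨k₁, g, k₂, rfl, rfl, rfl, hb⟩ |
      ⟨k₁, n, k₂, rfl, rfl, rfl, hb⟩)
    · exact hM.1.1 k₁ k₂
    · exact hM.1.2.1 k₁ k₂ g hb
    · exact hsub k₁ n hb
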